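/- arXiv:2110.03616 — 2 statements merged into one kernel-verified Lean document; each statement's English description precedes it below -/
import Mathlib

section
/- For every integer p ≥ 1 and all integers n ≥ k ≥ 0, the element C^{(p)}_{n,k} lies in the Laurent polynomial ring ℤ[q^{±1}, a^{±1}] and is divisible in that ring by {n}_k = {n}{n−1}⋯{n−k+1}; that is, C^{(p)}_{n,k} = {n}_k · P for some P ∈ ℤ[q^{±1}, a^{±1}]. -/
open Finset

noncomputable section

/-- The field ℚ(q,a) of rational functions in two indeterminates. -/
abbrev F : Type := FractionRing (MvPolynomial (Fin 2) ℚ)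

/-- The indeterminate q. -/
def qv : F := algebraMap (MvPolynomial (Fin 2) ℚ) F (MvPolynomial.X 0)

/-- The indeterminate a. -/
def av : F := algebraMap (MvPolynomial (Fin 2) ℚ) F (MvPolynomial.X 1)

/-- {n} = q^n - q^{-n}. -/
def qb (n : ℤ) : F := qv ^ n - qv ^ (-n)

/-- {n}_i = {n}{n-1}⋯{n-i+1}. -/
def fall (n : ℤ) (i : ℕ) : F := ∏ j ∈ range i, qb (n - j)

/-- {n}! = {n}_n. -/
def ffact (n : ℕ) : F := fall n n

/-- {n; a} = a q^n - a⁻¹ q^{-n}. -/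
def braA (n : ℤ) : F := av * qv ^ n - av⁻¹ * qv ^ (-n)

/-- {n; a}_i = {n;a}{n-1;a}⋯{n-i+1;a}. -/
def fallA (n : ℤ) (i : ℕ) : F := ∏ j ∈ range i, braA (n - j)

/-- α^i_{m,n} = (-a)^{-i} q^{-i(m+n)+i(i+3)/2} {m}_i {n}_i / {i}!. -/
def alpha (i : ℕ) (m n : ℤ) : F :=
  (-av) ^ (-(i : ℤ)) * qv ^ (-(i : ℤ) * (m + n) + ((i : ℤ) * ((i : ℤ) + 3)) / 2) *
    fall m i * fall n i / ffact i

/-- Partial sum s_i = l_1 + ⋯ + l_i of a multi-index. -/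
def psum {p : ℕ} (l : Fin p → ℕ) (i : ℕ) : ℕ :=
  ∑ j ∈ univ.filter (fun j : Fin p => (j : ℕ) < i), l j

/-- C^{(p)}_{n,k} = Σ_{l_1+⋯+l_p = k} (∏_{i=1}^{p-1} a^{-2 s_i} q^{2 s_i (s_i - 2n + 1)})
    ∏_{i=1}^{p} α^{l_i}_{n-s_{i-1}, n-s_{i-1}}. -/
def Cnk (p n k : ℕ) : F :=
  ∑ l ∈ Finset.Nat.antidiagonalTuple p k,
    (∏ i ∈ range (p - 1),
        av ^ (-(2 : ℤ) * (psum l (i + 1) : ℤ)) *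
          qv ^ ((2 : ℤ) * (psum l (i + 1) : ℤ) *
            ((psum l (i + 1) : ℤ) - 2 * (n : ℤ) + 1))) *
      ∏ i : Fin p,
        alpha (l i) ((n : ℤ) - (psum l (i : ℕ) : ℤ)) ((n : ℤ) - (psum l (i : ℕ) : ℤ))

/-- The Laurent polynomial ring ℤ[q^{±1}, a^{±1}] inside ℚ(q,a). -/
def LaurentZ : Subring F := Subring.closure {qv, av, qv⁻¹, av⁻¹}

/-- The entry l_{i+1} (0-indexed i) of a multi-index, or 0 if out of range. -/
def lget {p : ℕ} (l : Fin p → ℕ) (i : ℕ) : ℕ := if h : i < p then l ⟨i, h⟩ else 0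

/-- φ_k(l) = Σ_{i=1}^{p-1} 2 s_i (s_i - 2k + 1) + Σ_{i=1}^{p} l_i(l_i+3)/2
    + 2 Σ_{i=1}^{p-1} s_i l_{i+1}. -/
def phi (k : ℕ) {p : ℕ} (l : Fin p → ℕ) : ℤ :=
  (∑ i ∈ range (p - 1),
      2 * (psum l (i + 1) : ℤ) * ((psum l (i + 1) : ℤ) - 2 * (k : ℤ) + 1)) +
    (∑ i ∈ range p, ((lget l i : ℤ) * ((lget l i : ℤ) + 3)) / 2) +
    2 * ∑ i ∈ range (p - 1), (psum l (i + 1) : ℤ) * (lget l (i + 1) : ℤ)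

/-- [n] = {n}/{1}. -/
def qint (n : ℤ) : F := qb n / qb 1

/-- [n]! = [n][n-1]⋯[1]. -/
def qfact (n : ℕ) : F := ∏ i ∈ range n, qint ((i : ℤ) + 1)

/-- The q-multinomial coefficient [n choose l] = [n]!/([l_1]!⋯[l_p]!). -/
def qmultinomial {p : ℕ} (n : ℕ) (l : Fin p → ℕ) : F :=
  qfact n / ∏ i : Fin p, qfact (l i)

/-- The balanced Gaussian binomial coefficient [n choose i] = [n]!/([i]![n-i]!). -/
def qbinom (n i : ℕ) : F := qfact n / (qfact i * qfact (n - i))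

/-- C̃^{(p)}_{k,k} of formula (17). -/
def Ctilde (p k : ℕ) : F :=
  (-1) ^ k * av ^ (-(k : ℤ)) * qv ^ (-(2 : ℤ) * (k : ℤ) ^ 2) *
    ∑ l ∈ Finset.Nat.antidiagonalTuple p k,
      av ^ (-(2 : ℤ) *
          ∑ i ∈ range (p - 1), ((p : ℤ) - ((i : ℤ) + 1)) * (lget l i : ℤ)) *
        qv ^ phi k l * qmultinomial k l

section Aux

lemma map_inj : Function.Injective (algebraMap (MvPolynomial (Fin 2) ℚ) F) :=
  IsFractionRing.injective _ _

lemma qv_ne : qv ≠ 0 := by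
  intro h
  have h2 : algebraMap (MvPolynomial (Fin 2) ℚ) F (MvPolynomial.X 0) =
      algebraMap (MvPolynomial (Fin 2) ℚ) F 0 := by simpa [qv] using h
  exact MvPolynomial.X_ne_zero 0 (map_inj h2)

lemma qv_pow_ne_one (N : ℕ) (hN : N ≠ 0) : qv ^ N ≠ 1 := by
  intro h
  have h2 : algebraMap (MvPolynomial (Fin 2) ℚ) F ((MvPolynomial.X 0) ^ N) =
      algebraMap (MvPolynomial (Fin 2) ℚ) F 1 := by
    simpa [qv, map_pow] using h
  have h3 := congrArg (MvPolynomial.eval (fun _ => (2 : ℚ))) (map_inj h2)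
  simp at h3
  have : (1 : ℚ) < 2 ^ N := one_lt_pow₀ (by norm_num) hN
  rw [h3] at this
  exact lt_irrefl _ this

lemma qb_neg (z : ℤ) : qb (-z) = - qb z := by
  simp [qb]

lemma qb_ne {z : ℤ} (hz : z ≠ 0) : qb z ≠ 0 := by
  have key : ∀ w : ℤ, 0 < w → qb w ≠ 0 := by
    intro w hw h
    have h1 : qv ^ w = qv ^ (-w) := sub_eq_zero.mp h
    have h2 : qv ^ (2 * w) = 1 := by
      calc qv ^ (2 * w) = qv ^ w * qv ^ w := by
            rw [← zpow_add₀ qv_ne]; ring_nf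
        _ = qv ^ (-w) * qv ^ w := by rw [h1]
        _ = 1 := by rw [← zpow_add₀ qv_ne]; simp
    have h3 : qv ^ (2 * w).toNat = 1 := by
      rw [← zpow_natCast, show (((2 * w).toNat : ℤ)) = 2 * w by omega, h2]
    exact qv_pow_ne_one _ (by omega) h3
  rcases lt_trichotomy z 0 with h1 | h1 | h1
  · intro h
    exact key (-z) (by omega) (by rw [qb_neg, h, neg_zero])
  · exact absurd h1 hz
  · exact key z h1

lemma ffact_ne (i : ℕ) : ffact i ≠ 0 := by
  rw [ffact, fall]
  rw [Finset.prod_ne_zero_iff]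
  intro j hj
  rw [Finset.mem_range] at hj
  exact qb_ne (by omega)

lemma qv_mem : qv ∈ LaurentZ := Subring.subset_closure (by simp)
lemma av_mem : av ∈ LaurentZ := Subring.subset_closure (by simp)
lemma qvi_mem : qv⁻¹ ∈ LaurentZ := Subring.subset_closure (by simp)
lemma avi_mem : av⁻¹ ∈ LaurentZ := Subring.subset_closure (by simp)

lemma zpowq_mem (z : ℤ) : qv ^ z ∈ LaurentZ := by
  rcases z.eq_nat_or_neg with ⟨m, rfl | rfl⟩
  · rw [zpow_natCast]; exact pow_mem qv_mem m
  · rw [zpow_neg, zpow_natCast, ← inv_pow]; exact pow_mem qvi_mem m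

lemma zpowa_mem (z : ℤ) : av ^ z ∈ LaurentZ := by
  rcases z.eq_nat_or_neg with ⟨m, rfl | rfl⟩
  · rw [zpow_natCast]; exact pow_mem av_mem m
  · rw [zpow_neg, zpow_natCast, ← inv_pow]; exact pow_mem avi_mem m

lemma neg_av_zpow_mem (i : ℕ) : (-av) ^ (-(i : ℤ)) ∈ LaurentZ := by
  rw [zpow_neg, zpow_natCast, ← inv_pow, inv_neg]
  exact pow_mem (neg_mem avi_mem) i

lemma qb_mem (z : ℤ) : qb z ∈ LaurentZ := sub_mem (zpowq_mem z) (zpowq_mem (-z))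

lemma fall_mem (z : ℤ) (i : ℕ) : fall z i ∈ LaurentZ :=
  prod_mem fun _ _ => qb_mem _

lemma ffact_mem (i : ℕ) : ffact i ∈ LaurentZ := fall_mem _ _

lemma qb_split (a b : ℤ) : qb (a + b) = qv ^ a * qb b + qv ^ (-b) * qb a := by
  simp only [qb, mul_sub]
  rw [← zpow_add₀ qv_ne, ← zpow_add₀ qv_ne, ← zpow_add₀ qv_ne, ← zpow_add₀ qv_ne]
  rw [show a + -b = -b + a from by ring, show -b + -a = -(a + b) from by ring]
  ring

lemma fall_succ (z : ℤ) (j : ℕ) : fall z (j + 1) = fall z j * qb (z - j) :=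
  Finset.prod_range_succ _ _

lemma fall_succ' (z : ℤ) (j : ℕ) : fall z (j + 1) = qb z * fall (z - 1) j := by
  simp only [fall, Finset.prod_range_succ']
  rw [mul_comm]
  congr 1
  · simp
  · exact Finset.prod_congr rfl fun t _ => by congr 1; push_cast; ring

lemma ffact_succ (j : ℕ) : ffact (j + 1) = qb ((j : ℤ) + 1) * ffact j := by
  have h := fall_succ' ((j : ℤ) + 1) j
  rw [show ((j : ℤ) + 1 - 1) = (j : ℤ) from by ring] at h
  rw [ffact, show (((j + 1 : ℕ)) : ℤ) = (j : ℤ) + 1 from by push_cast; ring, h, ffact]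

lemma Bexists : ∀ m i : ℕ, i ≤ m → ∃ B ∈ LaurentZ, fall (m : ℤ) i = ffact i * B := by
  intro m
  induction m with
  | zero =>
    intro i hi
    interval_cases i
    exact ⟨1, one_mem _, by simp [fall, ffact]⟩
  | succ m ih =>
    intro i hi
    match i with
    | 0 => exact ⟨1, one_mem _, by simp [fall, ffact]⟩
    | j + 1 =>
      by_cases hjm : j + 1 ≤ m
      · obtain ⟨B1, hB1, e1⟩ := ih (j + 1) hjm
        obtain ⟨B2, hB2, e2⟩ := ih j (by omega)
        refine ⟨qv ^ ((j : ℤ) + 1) * B1 + qv ^ (-((m : ℤ) - j)) * B2,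
          add_mem (mul_mem (zpowq_mem _) hB1) (mul_mem (zpowq_mem _) hB2), ?_⟩
        have h1 : fall ((m + 1 : ℕ) : ℤ) (j + 1) = qb ((m : ℤ) + 1) * fall (m : ℤ) j := by
          have := fall_succ' ((m : ℤ) + 1) j
          rw [show ((m : ℤ) + 1 - 1) = (m : ℤ) from by ring] at this
          rw [show (((m + 1 : ℕ)) : ℤ) = (m : ℤ) + 1 from by push_cast; ring, this]
        have h2 : qb ((m : ℤ) + 1) =
            qv ^ ((j : ℤ) + 1) * qb ((m : ℤ) - j) + qv ^ (-((m : ℤ) - j)) * qb ((j : ℤ) + 1) := by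
          have := qb_split ((j : ℤ) + 1) ((m : ℤ) - j)
          rw [show ((j : ℤ) + 1 + ((m : ℤ) - j)) = (m : ℤ) + 1 from by ring] at this
          exact this
        have h3 : fall (m : ℤ) (j + 1) = fall (m : ℤ) j * qb ((m : ℤ) - j) := fall_succ _ _
        rw [h1, h2, add_mul, mul_assoc, mul_comm (qb ((m:ℤ) - j)) (fall (m:ℤ) j), ← h3, e1,
          ffact_succ]
        rw [e2]
        ring
      · have hje : j + 1 = m + 1 := by omega
        refine ⟨1, one_mem _, ?_⟩
        rw [mul_one, hje, ffact]

lemma alpha_fall (i m : ℕ) (h : i ≤ m) :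
    ∃ G ∈ LaurentZ, alpha i (m : ℤ) (m : ℤ) = fall (m : ℤ) i * G := by
  obtain ⟨B, hB, hBe⟩ := Bexists m i h
  refine ⟨(-av) ^ (-(i : ℤ)) *
      qv ^ (-(i : ℤ) * ((m : ℤ) + (m : ℤ)) + ((i : ℤ) * ((i : ℤ) + 3)) / 2) * B,
    mul_mem (mul_mem (neg_av_zpow_mem i) (zpowq_mem _)) hB, ?_⟩
  rw [alpha, hBe, mul_div_assoc, mul_div_cancel_left₀ _ (ffact_ne i)]
  ring

end Aux

section Aux2

lemma psum_zero {p : ℕ} (l : Fin p → ℕ) : psum l 0 = 0 := by simp [psum]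

lemma psum_total {p : ℕ} (l : Fin p → ℕ) : psum l p = ∑ i, l i := by
  rw [psum, Finset.filter_true_of_mem fun j _ => j.isLt]

lemma psum_succ {p : ℕ} (l : Fin (p + 1) → ℕ) (i : ℕ) :
    psum l (i + 1) = l 0 + psum (fun j => l j.succ) i := by
  simp only [psum, Finset.sum_filter, Fin.sum_univ_succ, Fin.val_zero, Fin.val_succ]
  simp [Nat.succ_lt_succ_iff]

lemma psum_mono {p : ℕ} (l : Fin p → ℕ) {i j : ℕ} (h : i ≤ j) : psum l i ≤ psum l j := by
  apply Finset.sum_le_sum_of_subset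
  intro x hx
  simp only [Finset.mem_filter, Finset.mem_univ, true_and] at *
  omega

lemma psum_add_get {p : ℕ} (l : Fin p → ℕ) (i : Fin p) :
    psum l ((i : ℕ) + 1) = psum l (i : ℕ) + l i := by
  have key : ∀ j : Fin p, (if (j : ℕ) < (i : ℕ) + 1 then l j else 0) =
      (if (j : ℕ) < (i : ℕ) then l j else 0) + (if j = i then l j else 0) := by
    intro j
    rcases lt_trichotomy (j : ℕ) (i : ℕ) with h | h | h
    · simp [h, Nat.lt_succ_of_lt h, Fin.ne_of_val_ne h.ne]
    · have hj : j = i := Fin.ext h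
      subst hj
      simp
    · simp [show ¬(j : ℕ) < (i : ℕ) from by omega,
        show ¬(j : ℕ) < (i : ℕ) + 1 from by omega, Fin.ne_of_val_ne h.ne']
  simp only [psum, Finset.sum_filter, key, Finset.sum_add_distrib]
  congr 1
  rw [Finset.sum_ite_eq' Finset.univ i l]
  simp

lemma fall_add (z : ℤ) (a b : ℕ) : fall z (a + b) = fall z a * fall (z - a) b := by
  rw [fall, Finset.prod_range_add]
  congr 1
  rw [fall]
  exact Finset.prod_congr rfl fun t _ => by congr 1; push_cast; ring

lemma prod_fall {p : ℕ} (l : Fin p → ℕ) (z : ℤ) :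
    (∏ i : Fin p, fall (z - (psum l (i : ℕ) : ℤ)) (l i)) = fall z (∑ i, l i) := by
  induction p generalizing z with
  | zero => simp [fall]
  | succ p ih =>
    rw [Fin.prod_univ_succ, Fin.sum_univ_succ]
    have h1 : ∀ i : Fin p, fall (z - (psum l ((i.succ : ℕ)) : ℤ)) (l i.succ) =
        fall ((z - l 0) - (psum (fun j => l j.succ) (i : ℕ) : ℤ)) (l i.succ) := by
      intro i
      congr 1
      rw [Fin.val_succ, psum_succ]
      push_cast
      ring
    rw [Finset.prod_congr rfl fun i _ => h1 i, ih (fun j => l j.succ) (z - l 0),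
      fall_add z (l 0) (∑ i : Fin p, l i.succ)]
    congr 2
    simp [psum_zero]

/-- Elements of the form c * P with P ∈ LaurentZ. -/
def multSet (c : F) : AddSubmonoid F where
  carrier := {x | ∃ P ∈ LaurentZ, x = c * P}
  zero_mem' := ⟨0, zero_mem _, (mul_zero c).symm⟩
  add_mem' := by
    rintro x y ⟨P1, h1, rfl⟩ ⟨P2, h2, rfl⟩
    exact ⟨P1 + P2, add_mem h1 h2, (mul_add c P1 P2).symm⟩

end Aux2

/-- For p ≥ 1 and n ≥ k ≥ 0, C^{(p)}_{n,k} lies in ℤ[q^{±1},a^{±1}]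
and is divisible there by {n}_k. -/
theorem Cnk_mem_and_divisible (p : ℕ) (hp : 1 ≤ p) (n k : ℕ) (hk : k ≤ n) :
    Cnk p n k ∈ LaurentZ ∧ ∃ P ∈ LaurentZ, Cnk p n k = fall (n : ℤ) k * P := by
  suffices h : ∃ P ∈ LaurentZ, Cnk p n k = fall (n : ℤ) k * P by
    obtain ⟨P, hP, hE⟩ := h
    exact ⟨hE ▸ mul_mem (fall_mem _ _) hP, P, hP, hE⟩
  have hsum : Cnk p n k ∈ multSet (fall (n : ℤ) k) := by
    rw [Cnk]
    apply AddSubmonoid.sum_mem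
    intro l hl
    have hsumk : ∑ i, l i = k := Finset.Nat.mem_antidiagonalTuple.mp hl
    have hb : ∀ i : Fin p, psum l (i : ℕ) + l i ≤ n := by
      intro i
      have h1 : psum l ((i : ℕ) + 1) ≤ psum l p := psum_mono l (by omega)
      rw [psum_add_get] at h1
      rw [psum_total, hsumk] at h1
      omega
    have key : ∀ i : Fin p, ∃ G ∈ LaurentZ,
        alpha (l i) ((n : ℤ) - (psum l (i : ℕ) : ℤ)) ((n : ℤ) - (psum l (i : ℕ) : ℤ)) =
          fall ((n : ℤ) - (psum l (i : ℕ) : ℤ)) (l i) * G := by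
      intro i
      have hle := hb i
      have hcast : (n : ℤ) - (psum l (i : ℕ) : ℤ) = ((n - psum l (i : ℕ) : ℕ) : ℤ) := by omega
      rw [hcast]
      exact alpha_fall _ _ (by omega)
    choose G hG hGe using key
    refine ⟨(∏ i ∈ range (p - 1),
        av ^ (-(2 : ℤ) * (psum l (i + 1) : ℤ)) *
          qv ^ ((2 : ℤ) * (psum l (i + 1) : ℤ) *
            ((psum l (i + 1) : ℤ) - 2 * (n : ℤ) + 1))) * ∏ i, G i,
      mul_mem (prod_mem fun _ _ => mul_mem (zpowa_mem _) (zpowq_mem _))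
        (prod_mem fun i _ => hG i), ?_⟩
    show _ * (∏ i : Fin p, alpha _ _ _) = _
    rw [Finset.prod_congr rfl fun i _ => hGe i,
      Finset.prod_mul_distrib (s := Finset.univ)
        (f := fun i : Fin p => fall ((n : ℤ) - (psum l (i : ℕ) : ℤ)) (l i)) (g := G),
      prod_fall l ((n : ℤ)), hsumk]
    ring
  obtain ⟨P, hP, hE⟩ := hsum
  exact ⟨P, hP, hE⟩
end
end

section
/- For all integers n ≥ 1, k ≥ 0 and all nonzero integers p and s, the element H^{(n)}_k = (−1)^k q^{2(p+s) k (n+k−1)} · C̃^{(p)}_{k,k}(q, q^n) · C̃^{(s)}_{k,k}(q, q^n) · ( {n+k−2}_k / {k}! ) is a Laurent polynomial in q with integer coefficients, i.e. lies in ℤ[q, q^{−1}]. -/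
open Finset

noncomputable section

/-- The field ℚ(q) of rational functions in one indeterminate q. -/
abbrev K : Type := RatFunc ℚ

/-- The indeterminate q. -/
def qx : K := RatFunc.X

/-- {n} = q^n - q^{-n}. -/
def qb1 (n : ℤ) : K := qx ^ n - qx ^ (-n)

/-- {n}_i = {n}{n-1}⋯{n-i+1}. -/
def fall1 (n : ℤ) (i : ℕ) : K := ∏ j ∈ range i, qb1 (n - j)

/-- {n}! = {n}_n. -/
def ffact1 (n : ℕ) : K := fall1 n n

/-- [n] = {n}/{1}. -/
def qint1 (n : ℤ) : K := qb1 n / qb1 1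

/-- [n]! = [n][n-1]⋯[1]. -/
def qfact1 (n : ℕ) : K := ∏ i ∈ range n, qint1 ((i : ℤ) + 1)

/-- The balanced Gaussian binomial [n choose i] = [n]!/([i]![n-i]!). -/
def qbinom1 (n i : ℕ) : K := qfact1 n / (qfact1 i * qfact1 (n - i))

/-- The Laurent polynomial ring ℤ[q, q⁻¹] inside ℚ(q). -/
def LaurentZ1 : Subring K := Subring.closure {qx, qx⁻¹}

/-- {n} built from a base element x in place of q. -/
def qbX (x : K) (n : ℤ) : K := x ^ n - x ^ (-n)

/-- [n] built from a base element x. -/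
def qintX (x : K) (n : ℤ) : K := qbX x n / qbX x 1

/-- [n]! built from a base element x. -/
def qfactX (x : K) (n : ℕ) : K := ∏ i ∈ range n, qintX x ((i : ℤ) + 1)

/-- The q-multinomial coefficient [n choose l] built from a base element x. -/
def qmultinomialX (x : K) {p : ℕ} (n : ℕ) (l : Fin p → ℕ) : K :=
  qfactX x n / ∏ i : Fin p, qfactX x (l i)

/-- C̃^{(p)}_{k,k}(x, x^n): the formula (17) with q replaced by the base element x
and a specialized to x^n. -/
def CtildeSpec (x : K) (p k : ℕ) (n : ℤ) : K :=
  (-1) ^ k * (x ^ n) ^ (-(k : ℤ)) * x ^ (-(2 : ℤ) * (k : ℤ) ^ 2) *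
    ∑ l ∈ Finset.Nat.antidiagonalTuple p k,
      (x ^ n) ^ (-(2 : ℤ) *
          ∑ i ∈ range (p - 1), ((p : ℤ) - ((i : ℤ) + 1)) * (lget l i : ℤ)) *
        x ^ phi k l * qmultinomialX x k l

/-- C̃^{(p)}_{k,k}(q, q^n) for p ∈ ℤ: for p ≥ 0 the formula itself; for p ≤ −1 it is
C̃^{(−p)}_{k,k}(q⁻¹, (q⁻¹)^n) = C̃^{(−p)}_{k,k}(q⁻¹, a⁻¹)|_{a = q^n}. -/
def CtildeZ (p : ℤ) (k : ℕ) (n : ℤ) : K :=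
  if 0 ≤ p then CtildeSpec qx p.natAbs k n else CtildeSpec qx⁻¹ p.natAbs k n

lemma qx_ne_zero : qx ≠ 0 := by
  have : (RatFunc.X : RatFunc ℚ) ≠ 0 := RatFunc.X_ne_zero
  simpa [qx] using this

lemma qx_pow_ne_one (m : ℕ) (hm : m ≠ 0) : qx ^ m ≠ 1 := by
  intro h
  have h2 : algebraMap (Polynomial ℚ) K (Polynomial.X ^ m) = algebraMap (Polynomial ℚ) K 1 := by
    simpa [qx, map_pow, RatFunc.algebraMap_X] using h
  have h3 := RatFunc.algebraMap_injective ℚ h2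
  have := congrArg Polynomial.natDegree h3
  simp [Polynomial.natDegree_X_pow] at this
  exact hm this

lemma qbX_qx_ne_zero (d : ℤ) (hd : d ≠ 0) : qbX qx d ≠ 0 := by
  have key : ∀ e : ℤ, 0 < e → qbX qx e ≠ 0 := by
    intro e he h
    have h1 : qx ^ e = qx ^ (-e) := by
      have := sub_eq_zero.mp h; simpa [qbX] using this
    have h2 : qx ^ (2 * e) = 1 := by
      have : qx ^ e * qx ^ e = qx ^ (-e) * qx ^ e := by rw [h1]
      rw [← zpow_add₀ qx_ne_zero, ← zpow_add₀ qx_ne_zero] at this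
      simpa [two_mul] using this
    have h3 : qx ^ ((2 * e).toNat) = 1 := by
      rw [← zpow_natCast, Int.toNat_of_nonneg (by omega)]; exact h2
    exact qx_pow_ne_one _ (by omega) h3
  rcases lt_or_gt_of_ne hd with h | h
  · intro hz
    have : qbX qx (-d) = - qbX qx d := by simp only [qbX, neg_neg]; ring
    exact key (-d) (by omega) (by rw [this, hz, neg_zero])
  · exact key d h

lemma qintX_qx_ne_zero (d : ℤ) (hd : d ≠ 0) : qintX qx d ≠ 0 :=
  div_ne_zero (qbX_qx_ne_zero d hd) (qbX_qx_ne_zero 1 one_ne_zero)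

lemma qfactX_succ (x : K) (n : ℕ) : qfactX x (n + 1) = qfactX x n * qintX x ((n : ℤ) + 1) := by
  rw [qfactX, prod_range_succ]; rfl

lemma qfactX_qx_ne_zero (n : ℕ) : qfactX qx n ≠ 0 := by
  induction n with
  | zero => simp [qfactX]
  | succ n ih =>
    rw [qfactX_succ]
    exact mul_ne_zero ih (qintX_qx_ne_zero _ (by omega))

lemma qx_mem : qx ∈ LaurentZ1 := Subring.subset_closure (Set.mem_insert _ _)
lemma qx_inv_mem : qx⁻¹ ∈ LaurentZ1 :=
  Subring.subset_closure (Set.mem_insert_of_mem _ rfl)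

lemma qx_zpow_mem (z : ℤ) : qx ^ z ∈ LaurentZ1 := by
  rcases le_or_gt 0 z with h | h
  · lift z to ℕ using h
    rw [zpow_natCast]; exact pow_mem qx_mem _
  · have : qx ^ z = (qx⁻¹) ^ ((-z).toNat) := by
      rw [← zpow_natCast, Int.toNat_of_nonneg (by omega), inv_zpow', neg_neg]
    rw [this]; exact pow_mem qx_inv_mem _
lemma qbX_pascal (a b : ℤ) : qbX qx (a + b) = qx ^ b * qbX qx a + qx ^ (-a) * qbX qx b := by
  simp only [qbX, neg_add]
  rw [zpow_add₀ qx_ne_zero a b, zpow_add₀ qx_ne_zero (-a) (-b)]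
  ring

lemma qintX_pascal (a b : ℤ) :
    qintX qx (a + b) = qx ^ b * qintX qx a + qx ^ (-a) * qintX qx b := by
  simp only [qintX]
  rw [qbX_pascal]
  ring

lemma key_binom : ∀ N a b : ℕ, a + b ≤ N →
    ∃ c ∈ LaurentZ1, qfactX qx (a + b) = c * (qfactX qx a * qfactX qx b) := by
  intro N
  induction N with
  | zero =>
    intro a b h
    have ha : a = 0 := by omega
    have hb : b = 0 := by omega
    subst ha; subst hb
    exact ⟨1, one_mem _, by simp [qfactX]⟩
  | succ N ih =>
    intro a b h
    match a, b with
    | 0, b => exact ⟨1, one_mem _, by simp [qfactX]⟩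
    | a + 1, 0 => exact ⟨1, one_mem _, by simp [qfactX]⟩
    | a + 1, b + 1 =>
      obtain ⟨c1, hc1L, hc1⟩ := ih a (b + 1) (by omega)
      obtain ⟨c2, hc2L, hc2⟩ := ih (a + 1) b (by omega)
      refine ⟨qx ^ ((b : ℤ) + 1) * c1 + qx ^ (-((a : ℤ) + 1)) * c2,
        add_mem (mul_mem (qx_zpow_mem _) hc1L) (mul_mem (qx_zpow_mem _) hc2L), ?_⟩
      have e1 : a + 1 + (b + 1) = (a + b + 1) + 1 := by omega
      have e2 : a + (b + 1) = a + b + 1 := by omega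
      rw [e1, qfactX_succ]
      rw [e2] at hc1
      have e2' : a + 1 + b = a + b + 1 := by omega
      rw [e2'] at hc2
      have hP : qintX qx (((a + b + 1 : ℕ) : ℤ) + 1)
          = qx ^ ((b : ℤ) + 1) * qintX qx ((a : ℤ) + 1)
            + qx ^ (-((a : ℤ) + 1)) * qintX qx ((b : ℤ) + 1) := by
        have := qintX_pascal ((a : ℤ) + 1) ((b : ℤ) + 1)
        have e3 : ((a + b + 1 : ℕ) : ℤ) + 1 = ((a : ℤ) + 1) + ((b : ℤ) + 1) := by push_cast; ring
        rw [e3]; exact this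
      have ha : qfactX qx (a + 1) = qfactX qx a * qintX qx ((a : ℤ) + 1) := qfactX_succ _ _
      have hb : qfactX qx (b + 1) = qfactX qx b * qintX qx ((b : ℤ) + 1) := qfactX_succ _ _
      set F1 := qfactX qx (a + b + 1)
      set X := qx ^ ((b : ℤ) + 1)
      set Y := qx ^ (-((a : ℤ) + 1))
      set Ia := qintX qx ((a : ℤ) + 1)
      set Ib := qintX qx ((b : ℤ) + 1)
      linear_combination F1 * hP + X * Ia * hc1 + Y * Ib * hc2
        - X * c1 * qfactX qx (b + 1) * ha - Y * c2 * qfactX qx (a + 1) * hb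

lemma multinom_key (p : ℕ) (l : Fin p → ℕ) :
    ∃ c ∈ LaurentZ1, qfactX qx (∑ i, l i) = c * ∏ i, qfactX qx (l i) := by
  induction p with
  | zero => exact ⟨1, one_mem _, by simp [qfactX]⟩
  | succ p ih =>
    obtain ⟨c1, hc1L, hc1⟩ := ih (fun i => l i.succ)
    obtain ⟨c2, hc2L, hc2⟩ := key_binom (l 0 + ∑ i : Fin p, l i.succ) (l 0) (∑ i : Fin p, l i.succ) le_rfl
    refine ⟨c2 * c1, mul_mem hc2L hc1L, ?_⟩
    rw [Fin.sum_univ_succ, Fin.prod_univ_succ, hc2, hc1]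
    ring
lemma qbX_inv (m : ℤ) : qbX qx⁻¹ m = - qbX qx m := by
  simp only [qbX, inv_zpow', neg_neg]; ring

lemma qintX_inv (m : ℤ) : qintX qx⁻¹ m = qintX qx m := by
  simp only [qintX, qbX_inv, neg_div_neg_eq]

lemma qfactX_inv (n : ℕ) : qfactX qx⁻¹ n = qfactX qx n := by
  unfold qfactX
  exact Finset.prod_congr rfl (fun i _ => qintX_inv _)

lemma qmultinomialX_mem (x : K) (hx : x = qx ∨ x = qx⁻¹) (p k : ℕ) (l : Fin p → ℕ)
    (hl : ∑ i, l i = k) : qmultinomialX x k l ∈ LaurentZ1 := by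
  have hF : ∀ m : ℕ, qfactX x m = qfactX qx m := by
    rcases hx with h | h <;> subst h
    · intro m; rfl
    · exact qfactX_inv
  obtain ⟨c, hcL, hc⟩ := multinom_key p l
  have hprod : (∏ i, qfactX qx (l i)) ≠ 0 :=
    Finset.prod_ne_zero_iff.mpr (fun i _ => qfactX_qx_ne_zero _)
  have : qmultinomialX x k l = c := by
    rw [qmultinomialX]
    rw [hF]
    rw [show (∏ i : Fin p, qfactX x (l i)) = ∏ i : Fin p, qfactX qx (l i) from
      Finset.prod_congr rfl (fun i _ => hF _)]
    rw [← hl, hc]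
    exact mul_div_cancel_right₀ c hprod
  rw [this]; exact hcL

lemma CtildeSpec_mem (x : K) (hx : x = qx ∨ x = qx⁻¹) (p k : ℕ) (n : ℤ) :
    CtildeSpec x p k n ∈ LaurentZ1 := by
  have hxz : ∀ z : ℤ, x ^ z ∈ LaurentZ1 := by
    rcases hx with h | h <;> subst h
    · exact qx_zpow_mem
    · intro z
      rw [inv_zpow']
      exact qx_zpow_mem _
  have hx0 : x ≠ 0 := by
    rcases hx with h | h <;> subst h
    · exact qx_ne_zero
    · exact inv_ne_zero qx_ne_zero
  unfold CtildeSpec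
  refine mul_mem (mul_mem (mul_mem ?_ ?_) (hxz _)) (Subring.sum_mem _ ?_)
  · exact pow_mem (neg_mem (one_mem _)) k
  · rw [← zpow_mul]; exact hxz _
  · intro l hl
    refine mul_mem (mul_mem ?_ (hxz _)) ?_
    · rw [← zpow_mul]; exact hxz _
    · exact qmultinomialX_mem x hx p k l (Finset.Nat.mem_antidiagonalTuple.mp hl)
lemma qb1_eq (m : ℤ) : qb1 m = qbX qx m := rfl
lemma fall1_mul' : ∀ k a : ℕ,
    fall1 ((a + k : ℕ) : ℤ) k * qfactX qx a = (qbX qx 1) ^ k * qfactX qx (a + k) := by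
  intro k
  induction k with
  | zero => intro a; simp [fall1]
  | succ k ih =>
    intro a
    have step : fall1 ((a + (k+1) : ℕ) : ℤ) (k + 1)
        = fall1 ((a + (k+1) : ℕ) : ℤ) k * qb1 (((a + (k+1) : ℕ) : ℤ) - k) := by
      rw [fall1, prod_range_succ]; rfl
    have e2 : ((a + (k+1) : ℕ) : ℤ) - (k : ℤ) = (a : ℤ) + 1 := by push_cast; ring
    rw [step, e2]
    have ihv := ih (a + 1)
    have hq : qb1 ((a : ℤ) + 1) = qbX qx 1 * qintX qx ((a : ℤ) + 1) := by
      rw [qb1_eq, qintX, mul_div_cancel₀ _ (qbX_qx_ne_zero 1 one_ne_zero)]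
    have hFa : qfactX qx (a + 1) = qfactX qx a * qintX qx ((a : ℤ) + 1) := qfactX_succ _ _
    have e3 : a + 1 + k = a + (k + 1) := by omega
    rw [e3] at ihv
    set Fl := fall1 ((a + (k+1) : ℕ) : ℤ) k
    calc Fl * qb1 ((a : ℤ) + 1) * qfactX qx a
        = (Fl * qfactX qx (a+1)) * qbX qx 1 := by rw [hq, hFa]; ring
      _ = (qbX qx 1) ^ k * qfactX qx (a + (k+1)) * qbX qx 1 := by rw [ihv]
      _ = (qbX qx 1) ^ (k+1) * qfactX qx (a + (k+1)) := by ring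
lemma ffact1_eq (k : ℕ) : ffact1 k = (qbX qx 1) ^ k * qfactX qx k := by
  have := fall1_mul' k 0
  simpa [ffact1, qfactX] using this

lemma fall_ratio_mem (n k : ℕ) (hn : 1 ≤ n) :
    fall1 ((n : ℤ) + (k : ℤ) - 2) k / ffact1 k ∈ LaurentZ1 := by
  rcases Nat.lt_or_ge n 2 with h2 | h2
  · -- n = 1
    have hn1 : n = 1 := by omega
    subst hn1
    rcases Nat.eq_zero_or_pos k with hk | hk
    · subst hk
      simp only [fall1, ffact1, range_zero, prod_empty]
      rw [div_one]; exact one_mem _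
    · have hzero : fall1 (((1:ℕ) : ℤ) + (k : ℤ) - 2) k = 0 := by
        apply Finset.prod_eq_zero (Finset.mem_range.mpr (show k - 1 < k by omega))
        have : ((1:ℕ) : ℤ) + (k : ℤ) - 2 - ((k - 1 : ℕ) : ℤ) = 0 := by
          push_cast [Nat.cast_sub hk]; ring
        rw [this]
        simp [qb1]
      rw [hzero, zero_div]; exact zero_mem _
  · -- n ≥ 2
    set a := n - 2 with ha
    have e1 : (n : ℤ) + (k : ℤ) - 2 = ((a + k : ℕ) : ℤ) := by
      push_cast [ha, Nat.cast_sub h2]; ring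
    obtain ⟨c, hcL, hc⟩ := key_binom (a + k) a k le_rfl
    have hfm := fall1_mul' k a
    rw [hc] at hfm
    have hFa : qfactX qx a ≠ 0 := qfactX_qx_ne_zero a
    have hfall : fall1 ((a + k : ℕ) : ℤ) k = (qbX qx 1) ^ k * (c * qfactX qx k) := by
      apply mul_right_cancel₀ hFa
      rw [hfm]; ring
    rw [e1, hfall, ffact1_eq]
    have hne : (qbX qx 1) ^ k * qfactX qx k ≠ 0 :=
      mul_ne_zero (pow_ne_zero _ (qbX_qx_ne_zero 1 one_ne_zero)) (qfactX_qx_ne_zero k)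
    have : (qbX qx 1) ^ k * (c * qfactX qx k) = c * ((qbX qx 1) ^ k * qfactX qx k) := by ring
    rw [this, mul_div_assoc, div_self hne, mul_one]
    exact hcL
lemma CtildeZ_mem (p : ℤ) (k : ℕ) (n : ℤ) : CtildeZ p k n ∈ LaurentZ1 := by
  unfold CtildeZ
  split_ifs with h
  · exact CtildeSpec_mem qx (Or.inl rfl) _ k n
  · exact CtildeSpec_mem qx⁻¹ (Or.inr rfl) _ k n

/-- for n ≥ 1, k ≥ 0 and nonzero integers p, s, the element
H^{(n)}_k = (−1)^k q^{2(p+s)k(n+k−1)} C̃^{(p)}_{k,k}(q,q^n) C̃^{(s)}_{k,k}(q,q^n)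
({n+k−2}_k/{k}!) lies in ℤ[q,q⁻¹]. -/
theorem Hnk_mem_laurent (n : ℕ) (hn : 1 ≤ n) (k : ℕ) (p s : ℤ)
    (hp : p ≠ 0) (hs : s ≠ 0) :
    (-1) ^ k * qx ^ (2 * (p + s) * (k : ℤ) * ((n : ℤ) + (k : ℤ) - 1)) *
        CtildeZ p k n * CtildeZ s k n *
        (fall1 ((n : ℤ) + (k : ℤ) - 2) k / ffact1 k) ∈ LaurentZ1 := by
  refine mul_mem (mul_mem (mul_mem (mul_mem ?_ (qx_zpow_mem _)) (CtildeZ_mem _ _ _))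
    (CtildeZ_mem _ _ _)) (fall_ratio_mem n k hn)
  exact pow_mem (neg_mem (one_mem _)) k
end
end
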